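/- Let f₀ be the vectorial negation on 𝔹^N. The dynamical system G_{f₀} on (𝒳,d) is expansive with constant of expansivity 1: for all distinct points x ≠ y in 𝒳, there exists n ∈ ℕ with d(G_{f₀}^n(x), G_{f₀}^n(y)) ≥ 1. -/

import Mathlib

open scoped BigOperators
open MeasureTheory ProbabilityTheory

namespace CI

/-- Strategies: sequences with values in {1,…,N}, encoded as `Fin N`. -/
abbrev Strat (N : ℕ) := ℕ → Fin N
/-- States of the system: boolean vectors of length N. -/
abbrev CState (N : ℕ) := Fin N → Bool
/-- The phase space 𝒳 = {1,…,N}^ℕ × 𝔹^N. -/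
abbrev Pt (N : ℕ) := Strat N × CState N

/-- d_e : sum of the discrete metric over the coordinates. -/
noncomputable def de {N : ℕ} (E F : CState N) : ℝ :=
  ∑ k : Fin N, if E k = F k then (0 : ℝ) else 1

/-- d_s(S,Š) = (9/N) Σ_{k≥1} |S^k − Š^k| / 10^k  (indices shifted to start at 0). -/
noncomputable def ds (N : ℕ) (S T : Strat N) : ℝ :=
  (9 / N) * ∑' k : ℕ, |((S k : ℝ)) - ((T k : ℝ))| / 10 ^ (k + 1)

/-- The distance d = d_e + d_s on 𝒳. -/
noncomputable def dC {N : ℕ} (p q : Pt N) : ℝ := de p.2 q.2 + ds N p.1 q.1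

/-- Flip bit k of the state E. -/
def bflip {N : ℕ} (k : Fin N) (E : CState N) : CState N :=
  fun j => if j = k then !(E j) else E j

/-- F_f(k,E): equal to E except possibly in coordinate k, where it is f(E)_k. -/
def Ff {N : ℕ} (f : CState N → CState N) (k : Fin N) (E : CState N) : CState N :=
  fun j => if j = k then f E k else E j

/-- The chaotic-iterations map G_f(S,E) = (σ(S), F_f(S^0,E)). -/
def Gf {N : ℕ} (f : CState N → CState N) (p : Pt N) : Pt N :=
  (fun n => p.1 (n + 1), Ff f (p.1 0) p.2)

/-- The vectorial negation f₀. -/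
def f0 {N : ℕ} (E : CState N) : CState N := fun j => !(E j)

/-- G_{f₀}. -/
def G0 {N : ℕ} : Pt N → Pt N := Gf f0

/-- Open ball for the distance dC. -/
def ballC {N : ℕ} (x : Pt N) (r : ℝ) : Set (Pt N) := {y | dC x y < r}

/-- Open sets of the metric space (𝒳,d). -/
def IsOpenC {N : ℕ} (U : Set (Pt N)) : Prop := ∀ x ∈ U, ∃ ε > 0, ballC x ε ⊆ U

/-- Iterating the flip-one-coordinate dynamics along a strategy. -/
def runCI {N : ℕ} (S : ℕ → Fin N) (E : CState N) : ℕ → CState N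
  | 0 => E
  | n + 1 => bflip (S n) (runCI S E n)

/-- The CIDS (cover-dependent) strategy: S^k = k if k ≤ N and X_k = 1, else S^k = 1
(indices encoded from 0, so "1" is `0 : Fin N`). -/
def cids {N : ℕ} [NeZero N] (X : CState N) : ℕ → Fin N :=
  fun k => if h : k < N then (if X ⟨k, h⟩ then ⟨k, h⟩ else 0) else 0


lemma ds_nonneg' {N : ℕ} (S T : Strat N) : 0 ≤ ds N S T := by
  unfold ds
  apply mul_nonneg (by positivity)
  exact tsum_nonneg fun k => by positivity

lemma de_ge_one' {N : ℕ} {E F : CState N} (h : E ≠ F) : 1 ≤ de E F := by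
  obtain ⟨k, hk⟩ := Function.ne_iff.mp h
  have h1 : (if E k = F k then (0 : ℝ) else 1) = 1 := if_neg hk
  calc (1 : ℝ) = (if E k = F k then (0 : ℝ) else 1) := h1.symm
    _ ≤ de E F := Finset.single_le_sum (f := fun j => if E j = F j then (0 : ℝ) else 1)
        (fun j _ => by split <;> norm_num) (Finset.mem_univ k)

lemma one_le_dC' {N : ℕ} {p q : Pt N} (h : p.2 ≠ q.2) : 1 ≤ dC p q :=
  le_trans (de_ge_one' h) (le_add_of_nonneg_right (ds_nonneg' _ _))

lemma Ff_f0_eq_bflip {N : ℕ} (k : Fin N) (E : CState N) : Ff f0 k E = bflip k E := by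
  funext j; simp only [Ff, f0, bflip]; split <;> simp_all

lemma G0_iter {N : ℕ} (x : Pt N) (n : ℕ) :
    G0^[n] x = (fun m => x.1 (m + n), runCI x.1 x.2 n) := by
  induction n with
  | zero => simp [runCI]
  | succ n ih =>
    rw [Function.iterate_succ_apply', ih]
    simp only [G0, Gf, Ff_f0_eq_bflip, runCI]
    refine Prod.ext ?_ ?_
    · funext m; simp; ring_nf
    · simp

lemma runCI_congr' {N : ℕ} (S T : Strat N) (E : CState N) (n : ℕ)
    (h : ∀ k < n, S k = T k) : runCI S E n = runCI T E n := by
  induction n with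
  | zero => rfl
  | succ n ih =>
    simp only [runCI, ih (fun k hk => h k (by omega)), h n (by omega)]

theorem stmt8 {N : ℕ} [NeZero N] :
    ∀ x y : Pt N, x ≠ y → ∃ n : ℕ, 1 ≤ dC (G0^[n] x) (G0^[n] y) := by
  intro x y hxy
  by_cases hE : x.2 = y.2
  · have hS : x.1 ≠ y.1 := fun h => hxy (Prod.ext h hE)
    have hex : ∃ n, x.1 n ≠ y.1 n := Function.ne_iff.mp hS
    classical
    set n0 := Nat.find hex with hn0def
    have hn0 : x.1 n0 ≠ y.1 n0 := Nat.find_spec hex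
    have hlt : ∀ k < n0, x.1 k = y.1 k := fun k hk => by
      by_contra h
      have : Nat.find hex ≤ k := Nat.find_le h
      omega
    refine ⟨n0 + 1, ?_⟩
    rw [G0_iter, G0_iter]
    apply one_le_dC'
    have hC : runCI x.1 x.2 n0 = runCI y.1 y.2 n0 := by
      rw [hE]; exact runCI_congr' _ _ _ _ hlt
    simp only [runCI, hC]
    intro h
    have h2 := congrFun h (x.1 n0)
    simp [bflip, hn0] at h2
  · exact ⟨0, by simpa using one_le_dC' hE⟩

end CI
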